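/- The 2-sequences a, b : ℕ² → ℚ defined by a(m,n) = binomial(m+n, n) (so that H_a = 1/(1−s−t)) and b(m,n) = 1 if m = n and 0 otherwise (so that H_b = 1/(1−s·t)) are both rational, but their Hadamard product ab : (m,n) ↦ a(m,n)·b(m,n), whose Hilbert series is Σ_{n≥0} binomial(2n,n)·sⁿtⁿ, is not rational: there exist no polynomials P, Q ∈ ℚ[s,t] with Q having nonzero constant term such that H_{ab}·Q = P in ℚ[[s,t]]. -/

import Mathlib

/-- The Hilbert series of an `r`-sequence `a : ℕʳ → K`, i.e. the multivariate formal
power series `Σ_{n ∈ ℕʳ} a(n)·t₁^{n₁}⋯t_r^{n_r}`. -/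
def hilbertSeries {K : Type*} [Field K] {r : ℕ} (a : (Fin r → ℕ) → K) :
    MvPowerSeries (Fin r) K :=
  fun d => a d

/-- An `r`-sequence is rational if there are polynomials `P, Q ∈ K[t₁,…,t_r]` with `Q`
having nonzero constant term such that `H_a · Q = P` in `K[[t₁,…,t_r]]`. -/
def IsRationalMSeq {K : Type*} [Field K] {r : ℕ} (a : (Fin r → ℕ) → K) : Prop :=
  ∃ P Q : MvPolynomial (Fin r) K, MvPolynomial.coeff 0 Q ≠ 0 ∧
    hilbertSeries a * (Q : MvPowerSeries (Fin r) K) = (P : MvPowerSeries (Fin r) K)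

/-- The 2-sequence `a(m,n) = binomial (m+n) n` over `ℚ`. -/
def binomSeq : (Fin 2 → ℕ) → ℚ := fun n => ((n 0 + n 1).choose (n 1) : ℚ)

/-- The 2-sequence `b(m,n) = 1` if `m = n` and `0` otherwise, over `ℚ`. -/
def diagSeq : (Fin 2 → ℕ) → ℚ := fun n => if n 0 = n 1 then 1 else 0

open Finset

noncomputable section

def cb : ℕ → ℚ := fun k => (k.centralBinom : ℚ)

lemma cb_rec (k : ℕ) : (k + 1 : ℚ) * cb (k + 1) = (4 * k + 2) * cb k := by
  have := Nat.succ_mul_centralBinom_succ k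
  have h : ((k + 1) * Nat.centralBinom (k + 1) : ℚ) = (2 * (2 * k + 1) * Nat.centralBinom k : ℚ) := by
    exact_mod_cast congrArg (Nat.cast : ℕ → ℚ) this
  simp only [cb]
  push_cast at h ⊢
  linarith

def T : ℕ → ℚ := fun n => ∑ k ∈ range (n + 1), cb k * cb (n - k)

lemma refl_sum (m : ℕ) : ∑ k ∈ range (m + 1), (k : ℚ) * cb k * cb (m - k)
    = ∑ k ∈ range (m + 1), ((m - k : ℕ) : ℚ) * cb (m - k) * cb k := by
  rw [← Finset.sum_range_reflect (fun k => (k : ℚ) * cb k * cb (m - k)) (m + 1)]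
  apply Finset.sum_congr rfl
  intro k hk
  simp only [mem_range] at hk
  have h1 : m + 1 - 1 - k = m - k := by omega
  have h2 : m - (m - k) = k := by omega
  rw [h1, h2]

lemma two_mul_weighted (m : ℕ) : 2 * (∑ k ∈ range (m + 1), (k : ℚ) * cb k * cb (m - k))
    = m * T m := by
  have h := refl_sum m
  have : (∑ k ∈ range (m + 1), (k : ℚ) * cb k * cb (m - k))
      + (∑ k ∈ range (m + 1), (k : ℚ) * cb k * cb (m - k)) = ∑ k ∈ range (m + 1), (m : ℚ) * (cb k * cb (m - k)) := by
    nth_rewrite 2 [h]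
    rw [← Finset.sum_add_distrib]
    apply Finset.sum_congr rfl
    intro k hk
    simp only [mem_range] at hk
    have : ((m - k : ℕ) : ℚ) = (m : ℚ) - k := by
      have : (k : ℚ) ≤ m := by exact_mod_cast Nat.le_of_lt_succ hk
      push_cast [Nat.cast_sub (Nat.le_of_lt_succ hk)]; ring
    rw [this]; ring
  rw [two_mul, this, ← Finset.mul_sum]; rfl

lemma T_succ (n : ℕ) : T (n + 1) = 4 * T n := by
  set A := ∑ k ∈ range (n + 2), (k : ℚ) * cb k * cb (n + 1 - k) with hA
  have h2A : (n + 1 : ℚ) * T (n + 1) = 2 * A := by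
    have h := two_mul_weighted (n + 1)
    push_cast at h
    rw [← hA] at h
    linarith
  have hAval : A = ∑ j ∈ range (n + 1), ((4 * j + 2 : ℚ)) * (cb j * cb (n - j)) := by
    rw [hA, Finset.sum_range_succ' (fun k => (k : ℚ) * cb k * cb (n + 1 - k)) (n + 1)]
    simp only [Nat.cast_zero, zero_mul, add_zero]
    apply Finset.sum_congr rfl
    intro j hj
    have h1 : n + 1 - (j + 1) = n - j := by omega
    rw [h1]
    push_cast
    rw [cb_rec j]
    ring
  have hM : 2 * (∑ j ∈ range (n + 1), (j : ℚ) * cb j * cb (n - j)) = n * T n :=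
    two_mul_weighted n
  set S1 := ∑ j ∈ range (n + 1), (j : ℚ) * cb j * cb (n - j) with hS1
  have hAval2 : A = 4 * S1 + 2 * T n := by
    rw [hAval, hS1]
    have hTn : T n = ∑ k ∈ range (n + 1), cb k * cb (n - k) := rfl
    rw [hTn, Finset.mul_sum, Finset.mul_sum, ← Finset.sum_add_distrib]
    apply Finset.sum_congr rfl
    intro j _
    ring
  have hfin : (n + 1 : ℚ) * T (n + 1) = (n + 1 : ℚ) * (4 * T n) := by
    rw [h2A, hAval2]
    have : 2 * S1 = n * T n := hM
    linarith
  have hne : (n + 1 : ℚ) ≠ 0 := by positivity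
  exact mul_left_cancel₀ hne hfin

lemma T_eq (n : ℕ) : T n = 4 ^ n := by
  induction n with
  | zero => simp [T, cb, Nat.centralBinom]
  | succ n ih => rw [T_succ, ih]; ring

def ub : PowerSeries ℚ := PowerSeries.mk cb

lemma coeff_ub_sq (n : ℕ) : PowerSeries.coeff n (ub * ub) = T n := by
  rw [PowerSeries.coeff_mul, Finset.Nat.sum_antidiagonal_eq_sum_range_succ_mk]
  simp [ub, T, PowerSeries.coeff_mk]

lemma key : (1 - 4 * PowerSeries.X) * (ub * ub) = (1 : PowerSeries ℚ) := by
  ext n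
  rw [sub_mul, one_mul, map_sub, mul_assoc, PowerSeries.coeff_one]
  cases n with
  | zero =>
    rw [coeff_ub_sq]
    simp [T, cb, Nat.centralBinom, PowerSeries.coeff_zero_eq_constantCoeff]
  | succ m =>
    rw [coeff_ub_sq, T_eq]
    have h4 : (4 : PowerSeries ℚ) = PowerSeries.C 4 := (map_ofNat (PowerSeries.C) 4).symm
    rw [h4, PowerSeries.coeff_C_mul, PowerSeries.coeff_succ_X_mul, coeff_ub_sq, T_eq]
    simp [pow_succ]
    ring

lemma ub_not_rat (p q : Polynomial ℚ) (hq : q.coeff 0 ≠ 0)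
    (h : ub * (q : PowerSeries ℚ) = (p : PowerSeries ℚ)) : False := by
  have hcoe : ((1 - 4 * Polynomial.X : Polynomial ℚ) : PowerSeries ℚ)
      = 1 - 4 * PowerSeries.X := by
    have h4 : ((4 : Polynomial ℚ) : PowerSeries ℚ) = 4 := by
      rw [← Polynomial.coeToPowerSeries.ringHom_apply, map_ofNat]
    push_cast [h4]
    ring
  have hps : ((q * q : Polynomial ℚ) : PowerSeries ℚ)
      = (((1 - 4 * Polynomial.X) * (p * p) : Polynomial ℚ) : PowerSeries ℚ) := by
    rw [Polynomial.coe_mul, Polynomial.coe_mul, Polynomial.coe_mul, hcoe]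
    calc (q : PowerSeries ℚ) * (q : PowerSeries ℚ)
        = ((1 - 4 * PowerSeries.X) * (ub * ub)) * ((q : PowerSeries ℚ) * (q : PowerSeries ℚ)) := by
          rw [key, one_mul]
      _ = (1 - 4 * PowerSeries.X) * ((ub * (q : PowerSeries ℚ)) * (ub * (q : PowerSeries ℚ))) := by
          ring
      _ = (1 - 4 * PowerSeries.X) * ((p : PowerSeries ℚ) * (p : PowerSeries ℚ)) := by rw [h]
  have hpoly : q * q = (1 - 4 * Polynomial.X) * (p * p) :=
    Polynomial.coe_inj.mp hps
  have hq0 : q ≠ 0 := fun hh => hq (by simp [hh])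
  have hp0 : p ≠ 0 := by
    rintro rfl
    rw [mul_zero, mul_zero, mul_self_eq_zero] at hpoly
    exact hq0 hpoly
  have hlin : (1 - 4 * Polynomial.X : Polynomial ℚ)
      = Polynomial.C (-4) * Polynomial.X + Polynomial.C 1 := by
    simp only [map_neg, map_one, map_ofNat]
    ring
  have hdlin : (1 - 4 * Polynomial.X : Polynomial ℚ).natDegree = 1 := by
    rw [hlin]; exact Polynomial.natDegree_linear (by norm_num)
  have hlin0 : (1 - 4 * Polynomial.X : Polynomial ℚ) ≠ 0 := by
    intro hh
    rw [hh] at hdlin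
    simp at hdlin
  have hd1 : (q * q).natDegree = q.natDegree + q.natDegree := Polynomial.natDegree_mul hq0 hq0
  have hd2 : ((1 - 4 * Polynomial.X) * (p * p)).natDegree
      = 1 + (p.natDegree + p.natDegree) := by
    rw [Polynomial.natDegree_mul hlin0 (mul_ne_zero hp0 hp0), hdlin,
      Polynomial.natDegree_mul hp0 hp0]
  rw [hpoly, hd2] at hd1
  omega

lemma coeff_hilbert {a : (Fin 2 → ℕ) → ℚ} (d : Fin 2 →₀ ℕ) :
    MvPowerSeries.coeff d (hilbertSeries a) = a d := rfl

lemma fin2ext {d e : Fin 2 →₀ ℕ} (h0 : d 0 = e 0) (h1 : d 1 = e 1) : d = e := by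
  ext i
  fin_cases i <;> assumption

def dia (N : ℕ) : Fin 2 →₀ ℕ := Finsupp.single 0 N + Finsupp.single 1 N

@[simp] lemma dia_apply0 (N : ℕ) : dia N 0 = N := by
  simp [dia, Finsupp.single_apply]

@[simp] lemma dia_apply1 (N : ℕ) : dia N 1 = N := by
  simp [dia, Finsupp.single_apply]

lemma dia_zero : dia 0 = 0 := by
  apply fin2ext <;> simp

lemma dia_inj : Function.Injective dia := by
  intro a b h
  have := congrArg (fun f : Fin 2 →₀ ℕ => f 0) h
  simpa using this

lemma coeff_dia_mul (a : (Fin 2 → ℕ) → ℚ) (ha : ∀ d : Fin 2 →₀ ℕ, d 0 ≠ d 1 → a d = 0)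
    (Q : MvPolynomial (Fin 2) ℚ) (N : ℕ) :
    MvPowerSeries.coeff (dia N) (hilbertSeries a * (Q : MvPowerSeries (Fin 2) ℚ))
      = ∑ k ∈ range (N + 1), a (dia k) * MvPolynomial.coeff (dia (N - k)) Q := by
  rw [MvPowerSeries.coeff_mul]
  have hsub : (range (N + 1)).image (fun k => (dia k, dia (N - k)))
      ⊆ Finset.HasAntidiagonal.antidiagonal (dia N) := by
    intro x hx
    simp only [Finset.mem_image, mem_range] at hx
    obtain ⟨k, hk, rfl⟩ := hx
    rw [Finset.HasAntidiagonal.mem_antidiagonal]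
    apply fin2ext <;> simp <;> omega
  rw [← Finset.sum_subset hsub]
  · rw [Finset.sum_image]
    · apply Finset.sum_congr rfl
      intro k _
      rw [coeff_hilbert, MvPolynomial.coeff_coe]
    · intro x _ y _ hxy
      exact dia_inj (congrArg Prod.fst hxy)
  · intro x hx hnot
    rw [Finset.HasAntidiagonal.mem_antidiagonal] at hx
    by_cases hd : x.1 0 = x.1 1
    · exfalso
      apply hnot
      simp only [Finset.mem_image, mem_range]
      refine ⟨x.1 0, ?_, ?_⟩
      · have := congrArg (fun f : Fin 2 →₀ ℕ => f 0) hx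
        simp only [Finsupp.add_apply, dia_apply0] at this
        omega
      · have h0 := congrArg (fun f : Fin 2 →₀ ℕ => f 0) hx
        have h1 := congrArg (fun f : Fin 2 →₀ ℕ => f 1) hx
        simp only [Finsupp.add_apply, dia_apply0, dia_apply1] at h0 h1
        have hx1 : x.1 = dia (x.1 0) := fin2ext (by simp) (by simp [← hd])
        have hx2 : x.2 = dia (N - x.1 0) := fin2ext (by simp; omega) (by simp; omega)
        rw [Prod.ext_iff]
        exact ⟨hx1.symm, hx2.symm⟩
    · rw [coeff_hilbert, ha x.1 hd, zero_mul]

def truncD (Q : MvPolynomial (Fin 2) ℚ) : Polynomial ℚ :=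
  ∑ j ∈ range (Q.totalDegree + 1), Polynomial.C (MvPolynomial.coeff (dia j) Q) * Polynomial.X ^ j

lemma coeff_truncD (Q : MvPolynomial (Fin 2) ℚ) (n : ℕ) :
    (truncD Q).coeff n = MvPolynomial.coeff (dia n) Q := by
  rw [truncD, Polynomial.finset_sum_coeff]
  simp only [Polynomial.coeff_C_mul, Polynomial.coeff_X_pow, mul_ite, mul_one, mul_zero]
  by_cases hn : n < Q.totalDegree + 1
  · rw [Finset.sum_eq_single n]
    · simp
    · intro j _ hj
      simp [Ne.symm hj]
    · intro h
      exact absurd (mem_range.mpr hn) h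
  · rw [Finset.sum_eq_zero]
    · symm
      apply MvPolynomial.coeff_eq_zero_of_totalDegree_lt
      have h0 : (0 : Fin 2) ∈ (dia n).support := by
        rw [Finsupp.mem_support_iff, dia_apply0]
        omega
      calc Q.totalDegree < n := by omega
        _ = dia n 0 := (dia_apply0 n).symm
        _ ≤ ∑ i ∈ (dia n).support, dia n i :=
            Finset.single_le_sum (fun i _ => Nat.zero_le _) h0
    · intro j hj
      rw [if_neg]
      intro hh
      rw [mem_range] at hj
      omega

lemma not_rat_ab : ¬ IsRationalMSeq (fun n => binomSeq n * diagSeq n) := by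
  rintro ⟨P, Q, hQ0, h⟩
  set ab : (Fin 2 → ℕ) → ℚ := fun n => binomSeq n * diagSeq n with hab
  have ha : ∀ d : Fin 2 →₀ ℕ, d 0 ≠ d 1 → ab d = 0 := by
    intro d hd
    simp [hab, diagSeq, hd]
  have hdiag : ∀ k, ab (dia k) = cb k := by
    intro k
    simp [hab, binomSeq, diagSeq, cb, Nat.centralBinom, two_mul]
  apply ub_not_rat (truncD P) (truncD Q)
  · rw [coeff_truncD, dia_zero]
    exact hQ0
  · ext N
    rw [PowerSeries.coeff_mul, Finset.Nat.sum_antidiagonal_eq_sum_range_succ_mk]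
    have hL : ∀ k, PowerSeries.coeff k ub = cb k := fun k => PowerSeries.coeff_mk _ _
    calc ∑ k ∈ range (N + 1),
          PowerSeries.coeff k ub * PowerSeries.coeff (N - k) (truncD Q : PowerSeries ℚ)
        = ∑ k ∈ range (N + 1), ab (dia k) * MvPolynomial.coeff (dia (N - k)) Q := by
          apply Finset.sum_congr rfl
          intro k _
          rw [hL, Polynomial.coeff_coe, coeff_truncD, hdiag]
      _ = MvPowerSeries.coeff (dia N) (hilbertSeries ab * (Q : MvPowerSeries (Fin 2) ℚ)) :=
          (coeff_dia_mul ab ha Q N).symm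
      _ = MvPowerSeries.coeff (dia N) (P : MvPowerSeries (Fin 2) ℚ) := by rw [h]
      _ = PowerSeries.coeff N (truncD P : PowerSeries ℚ) := by
          rw [MvPolynomial.coeff_coe, Polynomial.coeff_coe, coeff_truncD]

lemma conj1 : hilbertSeries binomSeq *
    (((1 - MvPolynomial.X 0 - MvPolynomial.X 1 : MvPolynomial (Fin 2) ℚ)) :
      MvPowerSeries (Fin 2) ℚ) = 1 := by
  have hcoe : (((1 - MvPolynomial.X 0 - MvPolynomial.X 1 : MvPolynomial (Fin 2) ℚ)) :
      MvPowerSeries (Fin 2) ℚ) = 1 - MvPowerSeries.X 0 - MvPowerSeries.X 1 := by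
    have h1 : (1 - MvPolynomial.X 0 - MvPolynomial.X 1 : MvPolynomial (Fin 2) ℚ)
        = MvPolynomial.C 1 + MvPolynomial.C (-1) * MvPolynomial.X 0
          + MvPolynomial.C (-1) * MvPolynomial.X 1 := by
      simp only [map_neg, map_one]; ring
    rw [h1, MvPolynomial.coe_add, MvPolynomial.coe_add, MvPolynomial.coe_mul,
      MvPolynomial.coe_mul, MvPolynomial.coe_C, MvPolynomial.coe_C, MvPolynomial.coe_X,
      MvPolynomial.coe_X]
    simp only [map_neg, map_one]
    ring
  rw [hcoe]
  have hexp : hilbertSeries binomSeq * (1 - MvPowerSeries.X 0 - MvPowerSeries.X 1)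
      = hilbertSeries binomSeq - hilbertSeries binomSeq * MvPowerSeries.X 0
        - hilbertSeries binomSeq * MvPowerSeries.X 1 := by ring
  rw [hexp]
  ext d
  rw [map_sub, map_sub, MvPowerSeries.X_def, MvPowerSeries.X_def,
    MvPowerSeries.coeff_mul_monomial, MvPowerSeries.coeff_mul_monomial, coeff_hilbert,
    MvPowerSeries.coeff_one]
  simp only [Finsupp.single_le_iff, mul_one, coeff_hilbert]
  have hd0 : (d = 0) ↔ (d 0 = 0 ∧ d 1 = 0) := by
    constructor
    · rintro rfl; simp
    · rintro ⟨a, b⟩; exact fin2ext (by simpa) (by simpa)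
  simp only [binomSeq, Finsupp.coe_tsub, Pi.sub_apply, Finsupp.single_apply, hd0]
  norm_num
  clear hd0 hcoe hexp
  generalize d 0 = m
  generalize d 1 = n
  rcases m with _ | m <;> rcases n with _ | n
  · simp
  · simp [Nat.choose_self]
  · simp
  · have hne : ¬(m + 1 = 0 ∧ n + 1 = 0) := by omega
    rw [if_neg hne, if_pos (by omega), if_pos (by omega)]
    have hpas : (m + 1 + (n + 1)).choose (n + 1)
        = (m + n + 1).choose n + (m + n + 1).choose (n + 1) := by
      rw [show m + 1 + (n + 1) = (m + n + 1) + 1 by omega]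
      exact Nat.choose_succ_succ _ _
    rw [show m + 1 - 1 + (n + 1) = m + n + 1 by omega,
      show m + 1 + (n + 1 - 1) = m + n + 1 by omega,
      show n + 1 - 1 = n by omega, hpas]
    push_cast
    ring

lemma conj2 : hilbertSeries diagSeq *
    (((1 - MvPolynomial.X 0 * MvPolynomial.X 1 : MvPolynomial (Fin 2) ℚ)) :
      MvPowerSeries (Fin 2) ℚ) = 1 := by
  have hcoe : (((1 - MvPolynomial.X 0 * MvPolynomial.X 1 : MvPolynomial (Fin 2) ℚ)) :
      MvPowerSeries (Fin 2) ℚ) = 1 - MvPowerSeries.X 0 * MvPowerSeries.X 1 := by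
    have h1 : (1 - MvPolynomial.X 0 * MvPolynomial.X 1 : MvPolynomial (Fin 2) ℚ)
        = MvPolynomial.C 1 + MvPolynomial.C (-1) * (MvPolynomial.X 0 * MvPolynomial.X 1) := by
      simp only [map_neg, map_one]; ring
    rw [h1, MvPolynomial.coe_add, MvPolynomial.coe_mul, MvPolynomial.coe_mul,
      MvPolynomial.coe_C, MvPolynomial.coe_C, MvPolynomial.coe_X, MvPolynomial.coe_X]
    simp only [map_neg, map_one]
    ring
  rw [hcoe]
  have hmon : (MvPowerSeries.X 0 * MvPowerSeries.X 1 : MvPowerSeries (Fin 2) ℚ)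
      = MvPowerSeries.monomial (Finsupp.single 0 1 + Finsupp.single 1 1) 1 := by
    rw [MvPowerSeries.X_def, MvPowerSeries.X_def, MvPowerSeries.monomial_mul_monomial, mul_one]
  have hexp : hilbertSeries diagSeq * (1 - MvPowerSeries.X 0 * MvPowerSeries.X 1)
      = hilbertSeries diagSeq
        - hilbertSeries diagSeq * (MvPowerSeries.X 0 * MvPowerSeries.X 1) := by ring
  rw [hexp, hmon]
  ext d
  rw [map_sub, MvPowerSeries.coeff_mul_monomial, coeff_hilbert, MvPowerSeries.coeff_one]
  have hd0 : (d = 0) ↔ (d 0 = 0 ∧ d 1 = 0) := by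
    constructor
    · rintro rfl; simp
    · rintro ⟨a, b⟩; exact fin2ext (by simpa) (by simpa)
  have hle : (Finsupp.single (0 : Fin 2) 1 + Finsupp.single 1 1 ≤ d) ↔ (1 ≤ d 0 ∧ 1 ≤ d 1) := by
    rw [Finsupp.le_def]
    constructor
    · intro h
      constructor
      · have := h 0; simpa [Finsupp.single_apply] using this
      · have := h 1; simpa [Finsupp.single_apply] using this
    · intro ⟨h1, h2⟩ i
      fin_cases i <;> simpa [Finsupp.single_apply]
  simp only [coeff_hilbert, diagSeq, Finsupp.coe_tsub, Pi.sub_apply, Finsupp.coe_add,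
    Pi.add_apply, Finsupp.single_apply, hd0, hle, mul_one]
  norm_num
  clear hd0 hle hcoe hmon hexp
  generalize d 0 = m
  generalize d 1 = n
  rcases m with _ | m <;> rcases n with _ | n
  · simp
  · simp
  · simp
  · have hne : ¬(m + 1 = 0 ∧ n + 1 = 0) := by omega
    rw [if_neg hne, if_pos (show 1 ≤ m + 1 ∧ 1 ≤ n + 1 by omega)]
    simp only [Nat.add_sub_cancel]
    by_cases hmn : m = n
    · subst hmn
      simp
    · rw [if_neg (by omega), if_neg hmn]
      ring

/-- `a(m,n) = binomial (m+n) n` (with `H_a·(1−s−t) = 1`) and the diagonal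
indicator `b` (with `H_b·(1−st) = 1`) are rational 2-sequences, their Hadamard product has
Hilbert series `Σ_n binomial (2n) n·sⁿtⁿ`, but the Hadamard product is not rational. -/
theorem hadamard_of_rationals_not_rational :
    hilbertSeries binomSeq *
      (((1 - MvPolynomial.X 0 - MvPolynomial.X 1 : MvPolynomial (Fin 2) ℚ)) :
        MvPowerSeries (Fin 2) ℚ) = 1 ∧
    hilbertSeries diagSeq *
      (((1 - MvPolynomial.X 0 * MvPolynomial.X 1 : MvPolynomial (Fin 2) ℚ)) :
        MvPowerSeries (Fin 2) ℚ) = 1 ∧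
    IsRationalMSeq binomSeq ∧ IsRationalMSeq diagSeq ∧
    (∀ n : Fin 2 → ℕ, binomSeq n * diagSeq n =
      if n 0 = n 1 then ((2 * n 0).choose (n 0) : ℚ) else 0) ∧
    ¬ IsRationalMSeq (fun n => binomSeq n * diagSeq n) := by
  refine ⟨conj1, conj2,
    ⟨1, 1 - MvPolynomial.X 0 - MvPolynomial.X 1, ?_,
      by rw [MvPolynomial.coe_one]; exact conj1⟩,
    ⟨1, 1 - MvPolynomial.X 0 * MvPolynomial.X 1, ?_,
      by rw [MvPolynomial.coe_one]; exact conj2⟩, ?_, not_rat_ab⟩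
  · simp
  · rw [← MvPolynomial.constantCoeff_eq]
    simp
  · intro n
    by_cases h : n 0 = n 1
    · simp only [binomSeq, diagSeq, h, if_pos, mul_one]
      rw [← h, ← two_mul]
    · simp [binomSeq, diagSeq, h]
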